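/- Let Θ⁰ be the full subcategory of a variety V of universal algebras consisting of the free algebras over finite subsets of a fixed infinite set X₀, let F₀ be the free algebra over the one-element set {x₀}, and suppose there exists an object F⁰ = F(X) in Θ⁰ that generates the variety V. Let ν₀ : F⁰ → F₀ be the homomorphism induced by the constant map X → {x₀}. If Φ is an automorphism of Θ⁰ that fixes all objects, induces the identity map on the endomorphism monoid End(F⁰), and satisfies Φ(ν₀) = ν₀, then Φ is an inner automorphism of Θ⁰. -/

import Mathlib

open CategoryTheory

/-- Reduction Theorem: Let `Θ⁰` be the category of finitely generated
free algebras of a variety `V` (a category `C` with faithful forgetful functor `Q`),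
let `F₀` be the free algebra on one generator `x₀` (so `Q` is represented by
`(F₀, x₀)`), and let `F1 = F(X)` be a free object over a nonempty set `X` (via
`m : X → Q(F1)`) that generates the variety `V` — equivalently, `F1` is a right
indicator in `C`.  Let `ν₀ : F1 ⟶ F₀` be the homomorphism induced by the constant map
`X → {x₀}`.  If `Φ` is an automorphism of `C` that fixes all objects, induces the
identity on `End(F1)`, and satisfies `Φ(ν₀) = ν₀`, then `Φ` is inner. -/
theorem stmt14 {C : Type u} [Category.{v} C] (Q : C ⥤ Type w) [Q.Faithful]
    (F₀ : C) (x₀ : Q.obj F₀)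
    (hrep : ∀ (A : C) (a : Q.obj A), ∃! α : F₀ ⟶ A, Q.map α x₀ = a)
    (F1 : C) (X : Type w) [Nonempty X] (m : X → Q.obj F1)
    (hfree : ∀ (A : C) (f : X → Q.obj A), ∃! g : F1 ⟶ A, ∀ x, Q.map g (m x) = f x)
    (hind : ∀ (A B : C) (s : Q.obj A ≃ Q.obj B),
      (∀ ν : B ⟶ F1, ∃ μ : A ⟶ F1, Q.map μ = Q.map ν ∘ ⇑s) →
      ∃ γ : A ≅ B, Q.map γ.hom = ⇑s)
    (ν₀ : F1 ⟶ F₀) (hν₀ : ∀ x : X, Q.map ν₀ (m x) = x₀)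
    (Φ Φinv : C ⥤ C) (hΦ1 : Φ ⋙ Φinv = 𝟭 C) (hΦ2 : Φinv ⋙ Φ = 𝟭 C)
    (hobj : ∀ A : C, Φ.obj A = A)
    (hEnd : ∀ ν : F1 ⟶ F1,
      eqToHom (hobj F1).symm ≫ Φ.map ν ≫ eqToHom (hobj F1) = ν)
    (hν : eqToHom (hobj F1).symm ≫ Φ.map ν₀ ≫ eqToHom (hobj F₀) = ν₀) :
    Nonempty (𝟭 C ≅ Φ) := by
  classical
  -- Φinv also fixes objects
  have hobjinv : ∀ A : C, Φinv.obj A = A := by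
    intro A
    have h1 : Φinv.obj (Φ.obj A) = A := Functor.congr_obj hΦ1 A
    rw [hobj A] at h1
    exact h1
  -- the "transported" map functions
  let T : ∀ {A B : C}, (A ⟶ B) → (A ⟶ B) :=
    fun {A B} f => eqToHom (hobj A).symm ≫ Φ.map f ≫ eqToHom (hobj B)
  let S : ∀ {A B : C}, (A ⟶ B) → (A ⟶ B) :=
    fun {A B} f => eqToHom (hobjinv A).symm ≫ Φinv.map f ≫ eqToHom (hobjinv B)
  have Tdef : ∀ {A B : C} (f : A ⟶ B),
      T f = eqToHom (hobj A).symm ≫ Φ.map f ≫ eqToHom (hobj B) := fun _ => rfl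
  have Sdef : ∀ {A B : C} (f : A ⟶ B),
      S f = eqToHom (hobjinv A).symm ≫ Φinv.map f ≫ eqToHom (hobjinv B) := fun _ => rfl
  have Tcomp : ∀ {A B D : C} (f : A ⟶ B) (g : B ⟶ D), T (f ≫ g) = T f ≫ T g := by
    intro A B D f g
    simp [Tdef]
  have TS : ∀ {A B : C} (f : A ⟶ B), T (S f) = f := by
    intro A B f
    rw [Tdef, Sdef]
    have h := Functor.congr_hom hΦ2 f
    simp only [Functor.comp_map, Functor.id_map] at h
    simp [Functor.map_comp, eqToHom_map, h]
  have ST : ∀ {A B : C} (f : A ⟶ B), S (T f) = f := by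
    intro A B f
    rw [Tdef, Sdef]
    have h := Functor.congr_hom hΦ1 f
    simp only [Functor.comp_map, Functor.id_map] at h
    simp [Functor.map_comp, eqToHom_map, h]
  have TEnd : ∀ ν : F1 ⟶ F1, T ν = ν := hEnd
  have Tν₀ : T ν₀ = ν₀ := hν
  -- ν₀ is a split epimorphism
  obtain ⟨ι, hι, -⟩ := hrep F1 (m (Classical.arbitrary X))
  have hιν : ι ≫ ν₀ = 𝟙 F₀ := by
    obtain ⟨β, hβ, huniq⟩ := hrep F₀ x₀
    have h1 : ι ≫ ν₀ = β := huniq _ (by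
      show Q.map (ι ≫ ν₀) x₀ = x₀
      rw [FunctorToTypes.map_comp_apply, hι, hν₀])
    have h2 : 𝟙 F₀ = β := huniq _ (by simp)
    rw [h1, h2]
  have epi : ∀ {D : C} (f g : F₀ ⟶ D), ν₀ ≫ f = ν₀ ≫ g → f = g := by
    intro D f g h
    calc f = ι ≫ ν₀ ≫ f := by rw [← Category.assoc, hιν, Category.id_comp]
    _ = ι ≫ ν₀ ≫ g := by rw [h]
    _ = g := by rw [← Category.assoc, hιν, Category.id_comp]
  -- T fixes every morphism F₀ ⟶ F1
  have Tfix : ∀ β : F₀ ⟶ F1, T β = β := by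
    intro β
    apply epi
    calc ν₀ ≫ T β = T ν₀ ≫ T β := by rw [Tν₀]
    _ = T (ν₀ ≫ β) := (Tcomp _ _).symm
    _ = ν₀ ≫ β := TEnd _
  -- representing morphisms
  let αf : ∀ {A : C}, Q.obj A → (F₀ ⟶ A) := fun {A} a => (hrep A a).choose
  have hα : ∀ {A : C} (a : Q.obj A), Q.map (αf a) x₀ = a :=
    fun {A} a => (hrep A a).choose_spec.1
  have hαu : ∀ {A : C} (a : Q.obj A) (β : F₀ ⟶ A), Q.map β x₀ = a → β = αf a :=
    fun {A} a β h => (hrep A a).choose_spec.2 β h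
  -- the bijections s A
  let s : ∀ A : C, Q.obj A → Q.obj A := fun A a => Q.map (T (αf a)) x₀
  let sinv : ∀ A : C, Q.obj A → Q.obj A := fun A a => Q.map (S (αf a)) x₀
  have sdef : ∀ (A : C) (a : Q.obj A), s A a = Q.map (T (αf a)) x₀ := fun _ _ => rfl
  have sinvdef : ∀ (A : C) (a : Q.obj A), sinv A a = Q.map (S (αf a)) x₀ := fun _ _ => rfl
  have key : ∀ {A B : C} (f : A ⟶ B) (a : Q.obj A),
      s B (Q.map f a) = Q.map (T f) (s A a) := by
    intro A B f a
    have h1 : αf a ≫ f = αf (Q.map f a) :=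
      hαu _ _ (by rw [FunctorToTypes.map_comp_apply, hα])
    rw [sdef, sdef, ← h1, Tcomp, FunctorToTypes.map_comp_apply]
  have s_sinv : ∀ (A : C) (a : Q.obj A), s A (sinv A a) = a := by
    intro A a
    have h1 : S (αf a) = αf (sinv A a) := hαu _ _ (sinvdef A a).symm
    rw [sdef, ← h1, TS, hα]
  have sinv_s : ∀ (A : C) (a : Q.obj A), sinv A (s A a) = a := by
    intro A a
    have h1 : T (αf a) = αf (s A a) := hαu _ _ (sdef A a).symm
    rw [sinvdef, ← h1, ST, hα]
  -- apply the indicator hypothesis to get isomorphisms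
  have hγ : ∀ A : C, ∃ γ : A ≅ A, Q.map γ.hom = s A := by
    intro A
    refine hind A A ⟨s A, sinv A, sinv_s A, s_sinv A⟩ ?_
    intro ν
    refine ⟨S ν, ?_⟩
    funext a
    have h1 : αf a ≫ S ν = T (αf a) ≫ ν := by
      rw [← Tfix (αf a ≫ S ν), Tcomp, TS]
    calc Q.map (S ν) a = Q.map (S ν) (Q.map (αf a) x₀) := by rw [hα]
    _ = Q.map (αf a ≫ S ν) x₀ := (FunctorToTypes.map_comp_apply Q (αf a) (S ν) x₀).symm
    _ = Q.map (T (αf a) ≫ ν) x₀ := by rw [h1]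
    _ = Q.map ν (Q.map (T (αf a)) x₀) := FunctorToTypes.map_comp_apply Q (T (αf a)) ν x₀
    _ = (Q.map ν ∘ s A) a := rfl
  choose γ hγQ using hγ
  -- naturality
  have nat : ∀ {A B : C} (f : A ⟶ B), f ≫ (γ B).hom = (γ A).hom ≫ T f := by
    intro A B f
    apply Q.map_injective
    refine ConcreteCategory.hom_ext _ _ fun a => ?_
    rw [FunctorToTypes.map_comp_apply, FunctorToTypes.map_comp_apply, hγQ, hγQ]
    exact key f a
  refine ⟨NatIso.ofComponents (fun A => γ A ≪≫ eqToIso (hobj A).symm) ?_⟩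
  intro A B f
  simp only [Functor.id_map, Iso.trans_hom, eqToIso.hom]
  have h := nat f
  rw [Tdef] at h
  rw [← Category.assoc f, h]
  simp
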